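/- Let B ⊆ ℤ^d be a finite set with 0 ∈ B, let x_1, …, x_n ∈ ℤ^d be such that the translates x_i + B, 1 ≤ i ≤ n, are pairwise disjoint, and let A = ∪_{i=1}^n (x_i + B). On a probability space (Ω, P), let ζ = (ζ(x))_{x ∈ A} be i.i.d. Bernoulli(α) random variables (α ∈ (0,1)), let 𝓘 be a random subset of {1,…,n} independent of ζ, and let ξ = (ξ(x))_{x ∈ A} be {0,1}-valued random variables such that almost surely, for every i ∈ 𝓘 and every b ∈ B, ξ(x_i + b) = ζ(x_i + b). Then for every E ⊆ {0,1}^B with π_α(E) > 0, P(for every 1 ≤ i ≤ n, the configuration (ξ(x_i + b))_{b ∈ B} lies in E) ≤ π_α(E)^n · 𝔼[π_α(E)^{−(n − |𝓘|)}], where π_α(E) = Σ_{η ∈ E} α^{Σ_b η(b)} (1−α)^{|B| − Σ_b η(b)}. -/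

import Mathlib

open MeasureTheory

/-!
STATEMENT 13: Let `B ⊆ ℤ^d` be finite with `0 ∈ B`, let `x_1, …, x_n ∈ ℤ^d` be such
that the translates `x_i + B` are pairwise disjoint, and let `A = ∪_i (x_i + B)`. On a
probability space `(Ω, P)` let `ζ = (ζ(x))_{x ∈ A}` be i.i.d. Bernoulli(α) random
variables (`α ∈ (0,1)`), let `𝓘` be a random subset of `{1,…,n}` independent of `ζ`,
and let `ξ = (ξ(x))_{x ∈ A}` be `{0,1}`-valued random variables such that a.s., for
every `i ∈ 𝓘` and every `b ∈ B`, `ξ(x_i + b) = ζ(x_i + b)`. Then for every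
`E ⊆ {0,1}^B` with `π_α(E) > 0`,
`P(∀ i, (ξ(x_i + b))_{b ∈ B} ∈ E) ≤ π_α(E)^n · 𝔼[π_α(E)^{−(n−|𝓘|)}]`,
where `π_α(E) = Σ_{η ∈ E} α^{Σ_b η(b)} (1−α)^{|B| − Σ_b η(b)}`.

Modelling: `B : Finset (Fin d → ℤ)`, `E : Finset ({b // b ∈ B} → Bool)` (`true` = `1`);
the random variables are total functions `ζ ξ : (Fin d → ℤ) → Ω → Bool` (only their
values on `A` matter) and `𝓘 : Ω → Finset (Fin n)`. The i.i.d. Bernoulli(α)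
distribution of `ζ` on `A`, and the independence of `𝓘` from `ζ`, are expressed by the
exact (finite-dimensional) product formulas for atoms, which fully characterize them.
Since `|𝓘| ≤ n`, `π_α(E)^{−(n−|𝓘|)} = (π_α(E)⁻¹)^(n−|𝓘|)` with a natural exponent.
-/

variable {d : ℕ}

/-- `π_α(E) = Σ_{η ∈ E} α^(#{b : η(b)=1}) (1−α)^(#{b : η(b)=0})` for
`E ⊆ {0,1}^B`. -/
noncomputable def cylWeight (α : ℝ) (B : Finset (Fin d → ℤ))
    (E : Finset ({b // b ∈ B} → Bool)) : ℝ :=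
  ∑ η ∈ E,
    α ^ (Finset.univ.filter fun b : {b // b ∈ B} => η b = true).card *
    (1 - α) ^ (Finset.univ.filter fun b : {b // b ∈ B} => η b = false).card

/-- Extend a family of block configurations `f` to a global configuration on `ℤ^d`. -/
noncomputable def extFun {d n : ℕ} (x : Fin n → (Fin d → ℤ)) (B : Finset (Fin d → ℤ))
    (f : Fin n → ({b // b ∈ B} → Bool)) (y : Fin d → ℤ) : Bool :=
  if h : ∃ p : Fin n × {b // b ∈ B}, y = x p.1 + p.2.1 then f h.choose.1 h.choose.2
  else false

lemma extFun_apply {d n : ℕ} (x : Fin n → (Fin d → ℤ)) (B : Finset (Fin d → ℤ))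
    (hdisj : ∀ i j : Fin n, i ≠ j → ∀ b ∈ B, ∀ b' ∈ B, x i + b ≠ x j + b')
    (f : Fin n → ({b // b ∈ B} → Bool)) (i : Fin n) (b : {b // b ∈ B}) :
    extFun x B f (x i + b.1) = f i b := by
  have key : ∀ p : Fin n × {b // b ∈ B}, x i + b.1 = x p.1 + p.2.1 → f p.1 p.2 = f i b := by
    rintro ⟨j, c⟩ hspec
    by_cases hij : i = j
    · subst hij
      have hc : c = b := by
        apply Subtype.ext
        exact (add_left_cancel hspec).symm
      rw [hc]
    · exact absurd hspec (hdisj i j hij b.1 b.2 c.1 c.2)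
  have h : ∃ p : Fin n × {b // b ∈ B}, x i + b.1 = x p.1 + p.2.1 := ⟨(i, b), rfl⟩
  rw [extFun, dif_pos h]
  exact key h.choose h.choose_spec

theorem joint_occurrence_bound {Ω : Type*} [MeasurableSpace Ω]
    (P : Measure Ω) (hP : IsProbabilityMeasure P)
    (α : ℝ) (hα : α ∈ Set.Ioo (0 : ℝ) 1)
    (B : Finset (Fin d → ℤ)) (hB : (0 : Fin d → ℤ) ∈ B)
    (n : ℕ) (x : Fin n → (Fin d → ℤ))
    (hdisj : ∀ i j : Fin n, i ≠ j → ∀ b ∈ B, ∀ b' ∈ B, x i + b ≠ x j + b')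
    (ζ ξ : (Fin d → ℤ) → Ω → Bool) (I : Ω → Finset (Fin n))
    -- ζ restricted to A = ∪_i (x_i + B) is a family of i.i.d. Bernoulli(α) variables:
    (hiid : ∀ e : (Fin d → ℤ) → Bool,
      P {ω | ∀ (i : Fin n), ∀ b ∈ B, ζ (x i + b) ω = e (x i + b)} =
        ∏ i : Fin n, ∏ b ∈ B,
          if e (x i + b) then ENNReal.ofReal α else ENNReal.ofReal (1 - α))
    -- 𝓘 is independent of (ζ(x))_{x ∈ A}:
    (hind : ∀ (S : Finset (Fin n)) (e : (Fin d → ℤ) → Bool),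
      P ({ω | ∀ (i : Fin n), ∀ b ∈ B, ζ (x i + b) ω = e (x i + b)} ∩ {ω | I ω = S}) =
        P {ω | ∀ (i : Fin n), ∀ b ∈ B, ζ (x i + b) ω = e (x i + b)} *
          P {ω | I ω = S})
    (hImeas : ∀ S : Finset (Fin n), MeasurableSet {ω | I ω = S})
    -- a.s., ξ agrees with ζ on the blocks x_i + B with i ∈ 𝓘:
    (hcopy : ∀ᵐ ω ∂P, ∀ i ∈ I ω, ∀ b ∈ B, ξ (x i + b) ω = ζ (x i + b) ω)
    (E : Finset ({b // b ∈ B} → Bool)) (hE : 0 < cylWeight α B E) :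
    P {ω | ∀ i : Fin n, (fun b : {b // b ∈ B} => ξ (x i + b.1) ω) ∈ E} ≤
      ENNReal.ofReal (cylWeight α B E ^ n *
        ∫ ω, (cylWeight α B E)⁻¹ ^ (n - (I ω).card) ∂P) := by
  classical
  obtain ⟨hα0, hα1⟩ := hα
  have hα0' : (0 : ℝ) ≤ α := le_of_lt hα0
  have h1α : (0 : ℝ) ≤ 1 - α := by linarith
  set π := cylWeight α B E with hπdef
  have hπ0 : (0 : ℝ) ≤ π := le_of_lt hE
  set w : Bool → ENNReal :=
    fun v => if v then ENNReal.ofReal α else ENNReal.ofReal (1 - α) with hw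
  set W : ({b // b ∈ B} → Bool) → ENNReal :=
    fun g => ∏ b ∈ B.attach, w (g b) with hWdef
  -- total mass one
  have hwt : w true = ENNReal.ofReal α := by simp [hw]
  have hwf : w false = ENNReal.ofReal (1 - α) := by simp [hw]
  have hsum_bool : w true + w false = 1 := by
    rw [hwt, hwf, ← ENNReal.ofReal_add hα0' h1α]
    norm_num
  have hWuniv : ∑ g : ({b // b ∈ B} → Bool), W g = 1 := by
    have h1 := Finset.prod_univ_sum (fun _ : {b // b ∈ B} => (Finset.univ : Finset Bool))
      (fun _ v => w v)
    rw [Fintype.piFinset_univ] at h1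
    have h2 : ∑ g : ({b // b ∈ B} → Bool), W g
        = ∑ g : ({b // b ∈ B} → Bool), ∏ b : {b // b ∈ B}, w (g b) := by
      refine Finset.sum_congr rfl fun g _ => ?_
      rw [hWdef, Finset.univ_eq_attach]
    rw [h2, ← h1]
    simp [Fintype.sum_bool, hsum_bool]
  -- mass of E
  have hWE : ∑ g ∈ E, W g = ENNReal.ofReal π := by
    have hterm : ∀ g : ({b // b ∈ B} → Bool),
        W g = ENNReal.ofReal
          (α ^ (Finset.univ.filter fun b : {b // b ∈ B} => g b = true).card *
           (1 - α) ^ (Finset.univ.filter fun b : {b // b ∈ B} => g b = false).card) := by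
      intro g
      rw [hWdef]
      simp only
      rw [← Finset.univ_eq_attach]
      have : ∀ b : {b // b ∈ B}, w (g b)
          = if g b = true then ENNReal.ofReal α else ENNReal.ofReal (1 - α) := by
        intro b; rw [hw]
      rw [Finset.prod_congr rfl fun b _ => this b, Finset.prod_ite
        (fun _ => ENNReal.ofReal α) (fun _ => ENNReal.ofReal (1 - α)),
        Finset.prod_const, Finset.prod_const]
      have hfilter : (Finset.univ.filter fun b : {b // b ∈ B} => ¬ g b = true)
          = Finset.univ.filter fun b : {b // b ∈ B} => g b = false := by
        refine Finset.filter_congr fun b _ => ?_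
        simp [Bool.not_eq_true]
      rw [hfilter, ENNReal.ofReal_mul (by positivity), ENNReal.ofReal_pow hα0',
        ENNReal.ofReal_pow h1α]
    rw [Finset.sum_congr rfl fun g _ => hterm g, hπdef, cylWeight,
      ENNReal.ofReal_sum_of_nonneg]
    intro g _
    positivity
  -- atom probabilities
  have hatomP : ∀ f : Fin n → ({b // b ∈ B} → Bool),
      P {ω | ∀ (i : Fin n), ∀ b ∈ B, ζ (x i + b) ω = extFun x B f (x i + b)} =
        ∏ i : Fin n, W (f i) := by
    intro f
    rw [hiid (extFun x B f)]
    refine Finset.prod_congr rfl fun i _ => ?_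
    rw [hWdef]
    simp only
    rw [← Finset.prod_attach B (fun b =>
      if extFun x B f (x i + b) then ENNReal.ofReal α else ENNReal.ofReal (1 - α))]
    refine Finset.prod_congr rfl fun b _ => ?_
    rw [extFun_apply x B hdisj f i b, hw]
  -- sum of atoms over the constrained family
  have hatomsum : ∀ S : Finset (Fin n),
      ∑ f ∈ Fintype.piFinset
          (fun i => if i ∈ S then E else (Finset.univ : Finset ({b // b ∈ B} → Bool))),
        P {ω | ∀ (i : Fin n), ∀ b ∈ B, ζ (x i + b) ω = extFun x B f (x i + b)} =
      ENNReal.ofReal (π ^ S.card) := by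
    intro S
    rw [Finset.sum_congr rfl fun f _ => hatomP f, ← Finset.prod_univ_sum]
    have hsplit : ∀ i : Fin n,
        (∑ g ∈ (if i ∈ S then E else (Finset.univ : Finset ({b // b ∈ B} → Bool))), W g)
          = if i ∈ S then ENNReal.ofReal π else 1 := by
      intro i
      by_cases hiS : i ∈ S
      · rw [if_pos hiS, if_pos hiS, hWE]
      · rw [if_neg hiS, if_neg hiS, hWuniv]
    rw [Finset.prod_congr rfl fun i _ => hsplit i, Finset.prod_ite_mem,
      Finset.univ_inter, Finset.prod_const, ← ENNReal.ofReal_pow hπ0]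
  -- main event
  set G := {ω | ∀ i : Fin n, (fun b : {b // b ∈ B} => ξ (x i + b.1) ω) ∈ E} with hG
  have hcover : P G ≤ ∑ S : Finset (Fin n), P (G ∩ {ω | I ω = S}) := by
    have hsub : G ⊆ ⋃ S : Finset (Fin n), (G ∩ {ω | I ω = S}) :=
      fun ω hω => Set.mem_iUnion.2 ⟨I ω, hω, rfl⟩
    exact (measure_mono hsub).trans (measure_iUnion_fintype_le _ _)
  have hstep : ∀ S : Finset (Fin n),
      P (G ∩ {ω | I ω = S}) ≤ ENNReal.ofReal (π ^ S.card) * P {ω | I ω = S} := by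
    intro S
    set FS := Fintype.piFinset
      (fun i => if i ∈ S then E else (Finset.univ : Finset ({b // b ∈ B} → Bool))) with hFS
    have hsub : P (G ∩ {ω | I ω = S}) ≤
        P (⋃ f ∈ FS,
          ({ω | ∀ (i : Fin n), ∀ b ∈ B, ζ (x i + b) ω = extFun x B f (x i + b)} ∩
            {ω | I ω = S})) := by
      refine measure_mono_ae ?_
      filter_upwards [hcopy] with ω hω
      intro hmem
      obtain ⟨hGmem, hIS⟩ := hmem
      have hIS' : I ω = S := hIS
      set f : Fin n → ({b // b ∈ B} → Bool) := fun i b => ζ (x i + b.1) ω with hf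
      have hfFS : f ∈ FS := by
        rw [hFS, Fintype.mem_piFinset]
        intro i
        by_cases hiS : i ∈ S
        · rw [if_pos hiS]
          have heq : f i = fun b : {b // b ∈ B} => ξ (x i + b.1) ω := by
            funext b
            exact (hω i (hIS' ▸ hiS) b.1 b.2).symm
          rw [heq]
          exact hGmem i
        · rw [if_neg hiS]; exact Finset.mem_univ _
      refine Set.mem_biUnion hfFS ⟨?_, hIS'⟩
      intro i b hb
      rw [show (b : Fin d → ℤ) = (⟨b, hb⟩ : {b // b ∈ B}).1 from rfl,
        extFun_apply x B hdisj f i ⟨b, hb⟩]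
    refine hsub.trans ?_
    calc P (⋃ f ∈ FS,
          ({ω | ∀ (i : Fin n), ∀ b ∈ B, ζ (x i + b) ω = extFun x B f (x i + b)} ∩
            {ω | I ω = S}))
        ≤ ∑ f ∈ FS,
            P ({ω | ∀ (i : Fin n), ∀ b ∈ B, ζ (x i + b) ω = extFun x B f (x i + b)} ∩
              {ω | I ω = S}) := measure_biUnion_finset_le _ _
      _ = ∑ f ∈ FS,
            P {ω | ∀ (i : Fin n), ∀ b ∈ B, ζ (x i + b) ω = extFun x B f (x i + b)} *
              P {ω | I ω = S} :=
          Finset.sum_congr rfl fun f _ => hind S (extFun x B f)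
      _ = (∑ f ∈ FS,
            P {ω | ∀ (i : Fin n), ∀ b ∈ B, ζ (x i + b) ω = extFun x B f (x i + b)}) *
              P {ω | I ω = S} := (Finset.sum_mul _ _ _).symm
      _ = ENNReal.ofReal (π ^ S.card) * P {ω | I ω = S} := by rw [hatomsum S]
  have hmain : P G ≤ ∑ S : Finset (Fin n), ENNReal.ofReal (π ^ S.card) * P {ω | I ω = S} :=
    hcover.trans (Finset.sum_le_sum fun S _ => hstep S)
  -- compute the integral
  have hint : ∫ ω, π⁻¹ ^ (n - (I ω).card) ∂P =
      ∑ S : Finset (Fin n), π⁻¹ ^ (n - S.card) * (P {ω | I ω = S}).toReal := by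
    have hfun : (fun ω => π⁻¹ ^ (n - (I ω).card)) = fun ω =>
        ∑ S : Finset (Fin n),
          Set.indicator {ω' | I ω' = S} (fun _ => π⁻¹ ^ (n - S.card)) ω := by
      funext ω
      have hsum := Finset.sum_eq_single_of_mem (s := (Finset.univ : Finset (Finset (Fin n))))
        (f := fun S : Finset (Fin n) =>
          Set.indicator {ω' | I ω' = S} (fun _ => π⁻¹ ^ (n - S.card)) ω)
        (I ω) (Finset.mem_univ _)
        (fun S _ hS => Set.indicator_of_notMem (s := {ω' | I ω' = S}) (a := ω)
          (fun hmem => hS (show S = I ω from (show I ω = S from hmem).symm))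
          (fun _ => π⁻¹ ^ (n - S.card)))
      rw [hsum]
      exact (Set.indicator_of_mem (show ω ∈ {ω' | I ω' = I ω} from rfl)
        (fun _ => π⁻¹ ^ (n - (I ω).card))).symm
    rw [hfun, integral_finset_sum]
    · refine Finset.sum_congr rfl fun S _ => ?_
      rw [integral_indicator_const _ (hImeas S), smul_eq_mul, mul_comm, measureReal_def]
    · intro S _
      exact (integrable_const _).indicator (hImeas S)
  have hrhs : ENNReal.ofReal (π ^ n * ∫ ω, π⁻¹ ^ (n - (I ω).card) ∂P) =
      ∑ S : Finset (Fin n), ENNReal.ofReal (π ^ S.card) * P {ω | I ω = S} := by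
    rw [hint, Finset.mul_sum]
    have hterm : ∀ S : Finset (Fin n),
        π ^ n * (π⁻¹ ^ (n - S.card) * (P {ω | I ω = S}).toReal) =
          π ^ S.card * (P {ω | I ω = S}).toReal := by
      intro S
      have hcard : S.card ≤ n := le_trans (Finset.card_le_univ S) (by simp)
      have hpow : π ^ n * π⁻¹ ^ (n - S.card) = π ^ S.card := by
        rw [inv_pow, ← pow_sub₀ π (ne_of_gt hE) (Nat.sub_le n S.card),
          Nat.sub_sub_self hcard]
      rw [← mul_assoc, hpow]
    rw [Finset.sum_congr rfl fun S _ => hterm S, ENNReal.ofReal_sum_of_nonneg]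
    · refine Finset.sum_congr rfl fun S _ => ?_
      rw [ENNReal.ofReal_mul (by positivity), ENNReal.ofReal_toReal (measure_ne_top P _)]
    · intro S _
      positivity
  exact hmain.trans (le_of_eq hrhs.symm)
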